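/- There exist infinitely many rational numbers z such that {4, (8/19)^2, z^2} is an Eulerian triple of squares; that is, the set of rationals z for which 4*z^2 + 4 + z^2 and (8/19)^2*z^2 + (8/19)^2 + z^2 are both squares of rational numbers is infinite. -/

import Mathlib

/-!
We produce infinitely many rational `z` with `5*z^2+4` and `425*z^2+64` both rational
squares, by constructing an infinite sequence of rational points on the elliptic curve
`y^2 = x^3 - 12320*x^2 + 37536000*x` (obtained by repeated doubling of one explicit
point) whose associated `z`-values have strictly increasing 2-adic valuation.
-/

private lemma v2_of_eq {q : ℚ} (a b : ℕ) (u v : ℤ) (hu : ¬ (2:ℤ) ∣ u) (hv : ¬ (2:ℤ) ∣ v)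
    (hq : q * (2^b * (v:ℚ)) = 2^a * (u:ℚ)) : padicValRat 2 q = (a:ℤ) - (b:ℤ) := by
  have hu0 : (u:ℚ) ≠ 0 := by
    exact_mod_cast fun h => hu (by rw [h]; exact dvd_zero 2)
  have hv0 : (v:ℚ) ≠ 0 := by
    exact_mod_cast fun h => hv (by rw [h]; exact dvd_zero 2)
  have h2 : (2:ℚ) ≠ 0 := two_ne_zero
  have hq0 : q ≠ 0 := by
    intro h
    rw [h, zero_mul] at hq
    exact (mul_ne_zero (pow_ne_zero a h2) hu0) hq.symm
  have h21 : padicValRat 2 (2:ℚ) = 1 := by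
    simpa using padicValRat.self (p := 2) one_lt_two
  have hvu : padicValRat 2 ((u:ℚ)) = 0 := by
    rw [padicValRat.of_int]
    simpa using padicValInt.eq_zero_of_not_dvd (p := 2) (by exact_mod_cast hu)
  have hvv : padicValRat 2 ((v:ℚ)) = 0 := by
    rw [padicValRat.of_int]
    simpa using padicValInt.eq_zero_of_not_dvd (p := 2) (by exact_mod_cast hv)
  have h := congrArg (padicValRat 2) hq
  rw [padicValRat.mul hq0 (mul_ne_zero (pow_ne_zero _ h2) hv0),
      padicValRat.mul (pow_ne_zero _ h2) hv0,
      padicValRat.mul (pow_ne_zero _ h2) hu0,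
      padicValRat.pow (2:ℚ), padicValRat.pow (2:ℚ), h21, hvu, hvv] at h
  omega

private lemma v2_add {q r : ℚ} (hq : q ≠ 0) (hr : r ≠ 0)
    (h : padicValRat 2 q < padicValRat 2 r) :
    q + r ≠ 0 ∧ padicValRat 2 (q + r) = padicValRat 2 q := by
  have hne : q + r ≠ 0 := by
    intro h0
    have hr' : r = -q := by linear_combination h0
    rw [hr', padicValRat.neg] at h
    exact lt_irrefl _ h
  exact ⟨hne, padicValRat.add_eq_of_lt hne hq hr h⟩

private def nextP : ℚ × ℚ → ℚ × ℚ
  | (x, y) =>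
    (((3*x^2 - 24640*x + 37536000) / (2*y))^2 + 12320 - 2*x,
     ((3*x^2 - 24640*x + 37536000) / (2*y)) *
       (x - (((3*x^2 - 24640*x + 37536000) / (2*y))^2 + 12320 - 2*x)) - y)

private def XN : ℤ := 875864375014197181723114627986437091956373734334418081031162031529441
private def XD : ℤ := 917837812468895295762458815718280226980367409118461062559007201
private def YN : ℤ := 25251809053225827194923047281817659459285420503737192811199132322580088827652758916510047512366266069521
private def YD : ℤ := 27806665863858107555726652752387808930609632372474898560722315304216969406423603098890270049199

private def basePt : ℚ × ℚ := ((XN : ℚ) / (4 * (XD : ℚ)), (YN : ℚ) / (8 * (YD : ℚ)))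

private def pt : ℕ → ℚ × ℚ
  | 0 => basePt
  | n + 1 => nextP (pt n)

/-- Main induction step: doubling preserves the invariants and increments `k`. -/
private lemma step_inv (x y : ℚ) (k : ℤ) (hk : 1 ≤ k)
    (hx : x ≠ 0) (hy : y ≠ 0)
    (hE : y^2 = x^3 - 12320*x^2 + 37536000*x)
    (hvx : padicValRat 2 x = -(2*k)) (hvy : padicValRat 2 y = -(3*k)) :
    (nextP (x, y)).1 ≠ 0 ∧ (nextP (x, y)).2 ≠ 0 ∧
    (nextP (x, y)).2^2 = (nextP (x, y)).1^3 - 12320*(nextP (x, y)).1^2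
      + 37536000*(nextP (x, y)).1 ∧
    padicValRat 2 (nextP (x, y)).1 = -(2*(k+1)) ∧
    padicValRat 2 (nextP (x, y)).2 = -(3*(k+1)) := by
  have h2 : (2:ℚ) ≠ 0 := two_ne_zero
  have h21 : padicValRat 2 (2:ℚ) = 1 := by
    simpa using padicValRat.self (p := 2) one_lt_two
  have v3 : padicValRat 2 (3:ℚ) = 0 := by
    simpa using v2_of_eq (q := 3) 0 0 3 1 (by norm_num) (by norm_num) (by norm_num)
  have v24640 : padicValRat 2 (24640:ℚ) = 6 := by
    simpa using v2_of_eq (q := 24640) 6 0 385 1 (by norm_num) (by norm_num) (by norm_num)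
  have v375 : padicValRat 2 (37536000:ℚ) = 8 := by
    simpa using v2_of_eq (q := 37536000) 8 0 146625 1 (by norm_num) (by norm_num) (by norm_num)
  have v12320 : padicValRat 2 (12320:ℚ) = 5 := by
    simpa using v2_of_eq (q := 12320) 5 0 385 1 (by norm_num) (by norm_num) (by norm_num)
  have hx2 : x^2 ≠ 0 := pow_ne_zero 2 hx
  -- the slope L
  set L : ℚ := (3*x^2 - 24640*x + 37536000) / (2*y) with hLdef
  set x' : ℚ := L^2 + 12320 - 2*x with hx'def
  set y' : ℚ := L * (x - x') - y with hy'def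
  have hnp : nextP (x, y) = (x', y') := rfl
  -- valuation of A := 3x^2 - 24640x + 37536000
  have hT1 : (3:ℚ) * x^2 ≠ 0 := mul_ne_zero (by norm_num) hx2
  have vT1 : padicValRat 2 (3*x^2) = -(4*k) := by
    rw [padicValRat.mul (by norm_num) hx2, padicValRat.pow x, v3, hvx]
    push_cast; ring
  have hT2 : -(24640*x) ≠ 0 := neg_ne_zero.mpr (mul_ne_zero (by norm_num) hx)
  have vT2 : padicValRat 2 (-(24640*x)) = 6 - 2*k := by
    rw [padicValRat.neg, padicValRat.mul (by norm_num) hx, v24640, hvx]; ring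
  have step1 := v2_add hT1 hT2 (by rw [vT1, vT2]; linarith)
  have e1 : 3*x^2 + -(24640*x) = 3*x^2 - 24640*x := by ring
  rw [e1] at step1
  have step2 := v2_add step1.1 (r := (37536000:ℚ)) (by norm_num)
    (by rw [step1.2, vT1, v375]; linarith)
  have hA : 3*x^2 - 24640*x + 37536000 ≠ 0 := step2.1
  have vA : padicValRat 2 (3*x^2 - 24640*x + 37536000) = -(4*k) := by
    rw [step2.2, step1.2, vT1]
  have h2y : (2:ℚ)*y ≠ 0 := mul_ne_zero h2 hy
  have hL0 : L ≠ 0 := div_ne_zero hA h2y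
  have vL : padicValRat 2 L = -(k+1) := by
    rw [hLdef, padicValRat.div hA h2y, vA, padicValRat.mul h2 hy, h21, hvy]; ring
  have hL2 : L^2 ≠ 0 := pow_ne_zero 2 hL0
  have vL2 : padicValRat 2 (L^2) = -(2*k+2) := by
    rw [padicValRat.pow L, vL]; push_cast; ring
  have step3 := v2_add hL2 (r := (12320:ℚ)) (by norm_num) (by rw [vL2, v12320]; linarith)
  have hT4 : -(2*x) ≠ 0 := neg_ne_zero.mpr (mul_ne_zero h2 hx)
  have vT4 : padicValRat 2 (-(2*x)) = 1 - 2*k := by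
    rw [padicValRat.neg, padicValRat.mul h2 hx, h21, hvx]; ring
  have step4 := v2_add step3.1 hT4 (by rw [step3.2, vL2, vT4]; linarith)
  have e2 : L^2 + 12320 + -(2*x) = x' := by rw [hx'def]; ring
  rw [e2] at step4
  have hx' : x' ≠ 0 := step4.1
  have vx' : padicValRat 2 x' = -(2*(k+1)) := by
    rw [step4.2, step3.2, vL2]; ring
  -- x - x'
  have hnx' : -x' ≠ 0 := neg_ne_zero.mpr hx'
  have vnx' : padicValRat 2 (-x') = -(2*(k+1)) := by rw [padicValRat.neg, vx']
  have step5 := v2_add hnx' hx (by rw [vnx', hvx]; linarith)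
  have e3 : -x' + x = x - x' := by ring
  rw [e3] at step5
  have hxx' : x - x' ≠ 0 := step5.1
  have vxx' : padicValRat 2 (x - x') = -(2*(k+1)) := by rw [step5.2, vnx']
  -- y'
  have hM : L * (x - x') ≠ 0 := mul_ne_zero hL0 hxx'
  have vM : padicValRat 2 (L * (x - x')) = -(3*k+3) := by
    rw [padicValRat.mul hL0 hxx', vL, vxx']; ring
  have hny : -y ≠ 0 := neg_ne_zero.mpr hy
  have vny : padicValRat 2 (-y) = -(3*k) := by rw [padicValRat.neg, hvy]
  have step6 := v2_add hM hny (by rw [vM, vny]; linarith)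
  have e4 : L * (x - x') + -y = y' := by rw [hy'def]; ring
  rw [e4] at step6
  have hy' : y' ≠ 0 := step6.1
  have vy' : padicValRat 2 y' = -(3*(k+1)) := by rw [step6.2, vM]; ring
  -- the curve equation is preserved
  have hL2y : 2*y*L = 3*x^2 - 24640*x + 37536000 := by
    rw [hLdef]; field_simp
  have hE' : y'^2 = x'^3 - 12320*x'^2 + 37536000*x' := by
    rw [hy'def, hx'def]
    linear_combination hE + (L^2 - 3*x + 12320) * hL2y
  rw [hnp]
  exact ⟨hx', hy', hE', vx', vy'⟩

private lemma pt_inv (n : ℕ) :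
    (pt n).1 ≠ 0 ∧ (pt n).2 ≠ 0 ∧
    (pt n).2^2 = (pt n).1^3 - 12320*(pt n).1^2 + 37536000*(pt n).1 ∧
    padicValRat 2 (pt n).1 = -(2*((n:ℤ)+1)) ∧
    padicValRat 2 (pt n).2 = -(3*((n:ℤ)+1)) := by
  induction n with
  | zero =>
    have hXD : ((4:ℚ) * (XD:ℚ)) ≠ 0 := by
      rw [XD]; norm_num
    have hYD : ((8:ℚ) * (YD:ℚ)) ≠ 0 := by
      rw [YD]; norm_num
    refine ⟨?_, ?_, ?_, ?_, ?_⟩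
    · show (XN : ℚ) / (4 * (XD : ℚ)) ≠ 0
      rw [XN, XD]; norm_num
    · show (YN : ℚ) / (8 * (YD : ℚ)) ≠ 0
      rw [YN, YD]; norm_num
    · show ((YN : ℚ) / (8 * (YD : ℚ)))^2
        = ((XN : ℚ) / (4 * (XD : ℚ)))^3 - 12320*((XN : ℚ) / (4 * (XD : ℚ)))^2
          + 37536000*((XN : ℚ) / (4 * (XD : ℚ)))
      rw [XN, XD, YN, YD]
      norm_num
    · show padicValRat 2 ((XN : ℚ) / (4 * (XD : ℚ))) = -(2*((0:ℤ)+1))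
      have := v2_of_eq (q := (XN : ℚ) / (4 * (XD : ℚ))) 0 2 XN XD
        (by rw [XN]; decide) (by rw [XD]; decide)
        (by rw [XN, XD]; norm_num)
      rw [this]; norm_num
    · show padicValRat 2 ((YN : ℚ) / (8 * (YD : ℚ))) = -(3*((0:ℤ)+1))
      have := v2_of_eq (q := (YN : ℚ) / (8 * (YD : ℚ))) 0 3 YN YD
        (by rw [YN]; decide) (by rw [YD]; decide)
        (by rw [YN, YD]; norm_num)
      rw [this]; norm_num
  | succ n ih =>
    obtain ⟨hx, hy, hE, hvx, hvy⟩ := ih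
    have hk : 1 ≤ (n:ℤ) + 1 := by omega
    have h := step_inv (pt n).1 (pt n).2 ((n:ℤ)+1) hk hx hy hE hvx hvy
    have hpt : pt (n+1) = nextP ((pt n).1, (pt n).2) := by
      show nextP (pt n) = _
      rw [Prod.mk.eta]
    rw [hpt]
    refine ⟨h.1, h.2.1, h.2.2.1, ?_, ?_⟩
    · rw [h.2.2.2.1]; push_cast; ring
    · rw [h.2.2.2.2]; push_cast; ring

private noncomputable def Z : ℕ → ℚ :=
  fun n => 64*(pt n).1*(pt n).2 / (1280*(pt n).1^2 - (pt n).2^2)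

private lemma z_props (x y : ℚ) (k : ℤ) (hk : 1 ≤ k)
    (hx : x ≠ 0) (hy : y ≠ 0)
    (hE : y^2 = x^3 - 12320*x^2 + 37536000*x)
    (hvx : padicValRat 2 x = -(2*k)) (hvy : padicValRat 2 y = -(3*k)) :
    padicValRat 2 (64*x*y / (1280*x^2 - y^2)) = 6 + k ∧
    (∃ r : ℚ, 4 * (64*x*y / (1280*x^2 - y^2)) ^ 2 + 4 + (64*x*y / (1280*x^2 - y^2)) ^ 2 = r ^ 2) ∧
    (∃ s : ℚ, (8/19) ^ 2 * (64*x*y / (1280*x^2 - y^2)) ^ 2 + (8/19) ^ 2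
        + (64*x*y / (1280*x^2 - y^2)) ^ 2 = s ^ 2) := by
  have h2 : (2:ℚ) ≠ 0 := two_ne_zero
  have v64 : padicValRat 2 (64:ℚ) = 6 := by
    simpa using v2_of_eq (q := 64) 6 0 1 1 (by norm_num) (by norm_num) (by norm_num)
  have v1280 : padicValRat 2 (1280:ℚ) = 8 := by
    simpa using v2_of_eq (q := 1280) 8 0 5 1 (by norm_num) (by norm_num) (by norm_num)
  have hx2 : x^2 ≠ 0 := pow_ne_zero 2 hx
  have hy2 : y^2 ≠ 0 := pow_ne_zero 2 hy
  have hny2 : -(y^2) ≠ 0 := neg_ne_zero.mpr hy2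
  have vny2 : padicValRat 2 (-(y^2)) = -(6*k) := by
    rw [padicValRat.neg, padicValRat.pow y, hvy]; push_cast; ring
  have hcx2 : (1280:ℚ)*x^2 ≠ 0 := mul_ne_zero (by norm_num) hx2
  have vcx2 : padicValRat 2 ((1280:ℚ)*x^2) = 8 - 4*k := by
    rw [padicValRat.mul (by norm_num) hx2, padicValRat.pow x, v1280, hvx]; push_cast; ring
  have stepD := v2_add hny2 hcx2 (by rw [vny2, vcx2]; linarith)
  have eD : -(y^2) + 1280*x^2 = 1280*x^2 - y^2 := by ring
  rw [eD] at stepD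
  have hD : 1280*x^2 - y^2 ≠ 0 := stepD.1
  have vD : padicValRat 2 (1280*x^2 - y^2) = -(6*k) := by rw [stepD.2, vny2]
  have hnum : (64:ℚ)*x*y ≠ 0 := mul_ne_zero (mul_ne_zero (by norm_num) hx) hy
  have hzd : (64*x*y / (1280*x^2 - y^2)) * (1280*x^2 - y^2) = 64*x*y :=
    div_mul_cancel₀ _ hD
  refine ⟨?_, ?_, ?_⟩
  · rw [padicValRat.div hnum hD, padicValRat.mul (mul_ne_zero (by norm_num) hx) hy,
      padicValRat.mul (by norm_num) hx, v64, hvx, hvy, vD]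
    ring
  · refine ⟨(2560*x^2 + 2*y^2) / (1280*x^2 - y^2), ?_⟩
    conv_rhs => rw [div_pow]
    rw [eq_div_iff (pow_ne_zero 2 hD)]
    linear_combination (5*((64*x*y / (1280*x^2 - y^2)) * (1280*x^2 - y^2) + 64*x*y)) * hzd
  · refine ⟨(8*y^2 + 98560*x^2 - 16*x^3) / (19*(1280*x^2 - y^2)), ?_⟩
    have h19D : (19:ℚ)*(1280*x^2 - y^2) ≠ 0 := mul_ne_zero (by norm_num) hD
    conv_rhs => rw [div_pow]
    rw [eq_div_iff (pow_ne_zero 2 h19D)]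
    linear_combination (425*((64*x*y / (1280*x^2 - y^2)) * (1280*x^2 - y^2) + 64*x*y)) * hzd
      + (256*x^3) * hE

private lemma Z_val (n : ℕ) : padicValRat 2 (Z n) = 7 + (n:ℤ) := by
  obtain ⟨hx, hy, hE, hvx, hvy⟩ := pt_inv n
  have h := (z_props (pt n).1 (pt n).2 ((n:ℤ)+1) (by omega) hx hy hE hvx hvy).1
  show padicValRat 2 (64*(pt n).1*(pt n).2 / (1280*(pt n).1^2 - (pt n).2^2)) = 7 + (n:ℤ)
  rw [h]; ring

theorem infinitely_many_z :
    {z : ℚ | (∃ r : ℚ, 4 * z ^ 2 + 4 + z ^ 2 = r ^ 2) ∧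
      (∃ s : ℚ, (8/19) ^ 2 * z ^ 2 + (8/19) ^ 2 + z ^ 2 = s ^ 2)}.Infinite := by
  refine Set.infinite_of_injective_forall_mem (f := Z) ?_ ?_
  · intro a b hab
    have h7 : (7:ℤ) + a = 7 + b := by rw [← Z_val a, hab, Z_val b]
    omega
  · intro n
    obtain ⟨hx, hy, hE, hvx, hvy⟩ := pt_inv n
    have h := z_props (pt n).1 (pt n).2 ((n:ℤ)+1) (by omega) hx hy hE hvx hvy
    exact ⟨h.2.1, h.2.2⟩
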